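/- Let F be a finite field and C1, C2, X, Y ⊆ F^n linear subspaces. Then, as subspaces of the space of n×n matrices over F, (X ⊗ Y) ∩ (C1 ⊞ C2) = (X ∩ C1) ⊗ Y + X ⊗ (Y ∩ C2), where + denotes the sum of subspaces. -/

import Mathlib

open Matrix Finset

namespace RTC

variable {F : Type*} [Field F] [Fintype F]

/-- All columns of the matrix `a` lie in the code `C`. -/
def colsIn {n1 n2 : ℕ} (C : Submodule F (Fin n1 → F)) (a : Matrix (Fin n1) (Fin n2) F) : Prop :=
  ∀ j : Fin n2, (fun i => a i j) ∈ C

/-- All rows of the matrix `a` lie in the code `C`. -/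
def rowsIn {n1 n2 : ℕ} (C : Submodule F (Fin n2 → F)) (a : Matrix (Fin n1) (Fin n2) F) : Prop :=
  ∀ i : Fin n1, (fun j => a i j) ∈ C

/-- Hamming weight of a matrix: the number of nonzero entries. -/
noncomputable def mwt {n1 n2 : ℕ} (x : Matrix (Fin n1) (Fin n2) F) : ℕ :=
  Nat.card {p : Fin n1 × Fin n2 // x p.1 p.2 ≠ 0}

/-- The number of nonzero columns of a matrix (`|x|_1`). -/
noncomputable def colWt {n1 n2 : ℕ} (x : Matrix (Fin n1) (Fin n2) F) : ℕ :=
  Nat.card {j : Fin n2 // (fun i => x i j) ≠ 0}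

/-- The number of nonzero rows of a matrix (`|x|_2`). -/
noncomputable def rowWt {n1 n2 : ℕ} (x : Matrix (Fin n1) (Fin n2) F) : ℕ :=
  Nat.card {i : Fin n1 // (fun j => x i j) ≠ 0}

/-- Hamming weight of a vector. -/
noncomputable def vwt {n : ℕ} (v : Fin n → F) : ℕ := Nat.card {i : Fin n // v i ≠ 0}

/-- Membership in `C1 ⊞ C2`: `c = a1 + a2` with all columns of `a1` in `C1`
and all rows of `a2` in `C2`. -/
def memBoxPlus {n1 n2 : ℕ} (C1 : Submodule F (Fin n1 → F)) (C2 : Submodule F (Fin n2 → F))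
    (c : Matrix (Fin n1) (Fin n2) F) : Prop :=
  ∃ a1 a2 : Matrix (Fin n1) (Fin n2) F, colsIn C1 a1 ∧ rowsIn C2 a2 ∧ c = a1 + a2

/-- The pair `(C1, C2)` is `ρ`-product-expanding: every `c ∈ C1 ⊞ C2` can be written as
`c = a1 + a2` (columns of `a1` in `C1`, rows of `a2` in `C2`) with
`ρ·(n1·|a1|_1 + n2·|a2|_2) ≤ |c|`. -/
def ProductExpanding {n1 n2 : ℕ} (ρ : ℝ) (C1 : Submodule F (Fin n1 → F))
    (C2 : Submodule F (Fin n2 → F)) : Prop :=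
  ∀ c : Matrix (Fin n1) (Fin n2) F, memBoxPlus C1 C2 c →
    ∃ a1 a2 : Matrix (Fin n1) (Fin n2) F, colsIn C1 a1 ∧ rowsIn C2 a2 ∧ c = a1 + a2 ∧
      ρ * ((n1 : ℝ) * (colWt a1 : ℝ) + (n2 : ℝ) * (rowWt a2 : ℝ)) ≤ (mwt c : ℝ)

/-- `C1 ⊗ F^{n2}` viewed as a submodule of matrices: all columns lie in `C`. -/
def colSp {n1 : ℕ} (n2 : ℕ) (C : Submodule F (Fin n1 → F)) :
    Submodule F (Matrix (Fin n1) (Fin n2) F) where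
  carrier := {a | ∀ j : Fin n2, (fun i => a i j) ∈ C}
  add_mem' := by
    intro a b ha hb j
    exact C.add_mem (ha j) (hb j)
  zero_mem' := by
    intro j
    exact C.zero_mem
  smul_mem' := by
    intro r a ha j
    exact C.smul_mem r (ha j)

/-- `F^{n1} ⊗ C` viewed as a submodule of matrices: all rows lie in `C`. -/
def rowSp (n1 : ℕ) {n2 : ℕ} (C : Submodule F (Fin n2 → F)) :
    Submodule F (Matrix (Fin n1) (Fin n2) F) where
  carrier := {a | ∀ i : Fin n1, (fun j => a i j) ∈ C}
  add_mem' := by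
    intro a b ha hb i
    exact C.add_mem (ha i) (hb i)
  zero_mem' := by
    intro i
    exact C.zero_mem
  smul_mem' := by
    intro r a ha i
    exact C.smul_mem r (ha i)

/-- The tensor product code `C1 ⊗ C2`: all columns in `C1` and all rows in `C2`. -/
def tens {n1 n2 : ℕ} (C1 : Submodule F (Fin n1 → F)) (C2 : Submodule F (Fin n2 → F)) :
    Submodule F (Matrix (Fin n1) (Fin n2) F) :=
  colSp n2 C1 ⊓ rowSp n1 C2

/-- The dual code `C^⊥`. -/
def dualCode {n : ℕ} (C : Submodule F (Fin n → F)) : Submodule F (Fin n → F) where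
  carrier := {y | ∀ c ∈ C, ∑ i, y i * c i = 0}
  add_mem' := by
    intro a b ha hb c hc
    have h2 : ∑ i, (a + b) i * c i = (∑ i, a i * c i) + ∑ i, b i * c i := by
      rw [← Finset.sum_add_distrib]; congr 1; funext i
      show (a i + b i) * c i = _; ring
    rw [h2, ha c hc, hb c hc, add_zero]
  zero_mem' := by
    intro c hc
    simp
  smul_mem' := by
    intro r a ha c hc
    have h2 : ∑ i, (r • a) i * c i = r * ∑ i, a i * c i := by
      rw [Finset.mul_sum]; congr 1; funext i
      show (r * a i) * c i = _; ring
    rw [h2, ha c hc, mul_zero]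

/-- Normalized distance `δ(x, S) = min_{s ∈ S} |x − s| / n²` of a matrix to a set of matrices. -/
noncomputable def ndelta {n : ℕ} (x : Matrix (Fin n) (Fin n) F)
    (S : Set (Matrix (Fin n) (Fin n) F)) : ℝ :=
  sInf ((fun s => (mwt (x - s) : ℝ) / ((n : ℝ) ^ 2)) '' S)

/-- The code `C1 ⊗ C2` is `ρ`-robustly testable. -/
def RobustlyTestable {n : ℕ} (ρ : ℝ) (C1 C2 : Submodule F (Fin n → F)) : Prop :=
  ∀ x : Matrix (Fin n) (Fin n) F,
    ρ * ndelta x (tens C1 C2 : Set (Matrix (Fin n) (Fin n) F)) ≤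
      (ndelta x (colSp n C1 : Set (Matrix (Fin n) (Fin n) F)) +
       ndelta x (rowSp n C2 : Set (Matrix (Fin n) (Fin n) F))) / 2

/-- The code `C1 ⊗ C2` is `ρ`-agreement testable. -/
def AgreementTestable {n : ℕ} (ρ : ℝ) (C1 C2 : Submodule F (Fin n → F)) : Prop :=
  ∀ c1 c2 : Matrix (Fin n) (Fin n) F, colsIn C1 c1 → rowsIn C2 c2 →
    ∃ c : Matrix (Fin n) (Fin n) F, colsIn C1 c ∧ rowsIn C2 c ∧
      ρ * ((colWt (c1 - c) : ℝ) + (rowWt (c2 - c) : ℝ)) ≤ (mwt (c1 - c2) : ℝ) / (n : ℝ)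

/-- The `q`-ary entropy function. -/
noncomputable def Hq (q : ℕ) (x : ℝ) : ℝ :=
  x * Real.logb q (q - 1) - x * Real.logb q x - (1 - x) * Real.logb q (1 - x)

/-- A subspace is `α`-sparse if it is spanned by vectors of Hamming weight at most `α·n`. -/
def Sparse {n : ℕ} (α : ℝ) (V : Submodule F (Fin n → F)) : Prop :=
  ∃ S : Set (Fin n → F), (∀ v ∈ S, (vwt v : ℝ) ≤ α * n) ∧ Submodule.span F S = V

/-- The Gaussian (`q`-ary) binomial coefficient, as a real number. -/
noncomputable def qBinom (q n k : ℕ) : ℝ :=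
  ∏ i ∈ Finset.range k, ((q : ℝ) ^ (n - i) - 1) / ((q : ℝ) ^ (k - i) - 1)

/-- Minimal Hamming distance from a vector to a code. -/
noncomputable def vdist {n : ℕ} (v : Fin n → F) (C : Submodule F (Fin n → F)) : ℕ :=
  sInf {d : ℕ | ∃ c ∈ C, vwt (v - c) = d}

/-- A codeword `x ∈ C1 ⊞ C2` is `Δ`-minimal. -/
def DeltaMinimal {n : ℕ} (C1 C2 : Submodule F (Fin n → F)) (Δ : ℝ)
    (x : Matrix (Fin n) (Fin n) F) : Prop :=
  (∀ i : Fin n, (vwt (fun j => x i j) : ℝ) ≤ (vdist (fun j => x i j) C2 : ℝ) + Δ) ∧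
  (∀ j : Fin n, (vwt (fun i => x i j) : ℝ) ≤ (vdist (fun i => x i j) C1 : ℝ) + Δ)

/-- Hamming weight of the submatrix of `x` with rows in `A` and columns in `B`. -/
noncomputable def subWt {n : ℕ} (x : Matrix (Fin n) (Fin n) F) (A B : Finset (Fin n)) : ℕ :=
  Nat.card {p : Fin n × Fin n // p.1 ∈ A ∧ p.2 ∈ B ∧ x p.1 p.2 ≠ 0}

/-- The pair `(C1, C2)` is `(s, m, β)`-product-expanding. -/
def SMBExpanding {n : ℕ} (s m β : ℝ) (C1 C2 : Submodule F (Fin n → F)) : Prop :=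
  ∀ x : Matrix (Fin n) (Fin n) F, memBoxPlus C1 C2 x → x ≠ 0 →
    DeltaMinimal C1 C2 (β * n) x →
    ∀ A B : Finset (Fin n), (n : ℝ) - m ≤ (A.card : ℝ) → (n : ℝ) - m ≤ (B.card : ℝ) →
      s ≤ (subWt x A B : ℝ)

/-- The function `c` restricted to every line parallel to axis `i` lies in `C i`
(membership in `C^{(i)}`). -/
def axisIn {ι : Type*} [DecidableEq ι] {n : ι → ℕ} (C : ∀ i, Submodule F (Fin (n i) → F))
    (i : ι) (a : (∀ j, Fin (n j)) → F) : Prop :=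
  ∀ y : ∀ j, Fin (n j), (fun s => a (Function.update y i s)) ∈ C i

/-- The number of grid points lying on a line parallel to axis `i` on which `a` is not
identically zero.  Since every such line contains exactly `n i` points, this equals
`n i · |a|_i` where `|a|_i` is the number of nonzero lines parallel to axis `i`. -/
noncomputable def lineCnt {ι : Type*} [DecidableEq ι] {n : ι → ℕ} (i : ι)
    (a : (∀ j, Fin (n j)) → F) : ℕ :=
  Nat.card {y : ∀ j, Fin (n j) // (fun s : Fin (n i) => a (Function.update y i s)) ≠ 0}

/-- Hamming weight of an element of `F^{n_1 × … × n_m}`. -/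
noncomputable def gwt {ι : Type*} {n : ι → ℕ} (a : (∀ j, Fin (n j)) → F) : ℕ :=
  Nat.card {y : ∀ j, Fin (n j) // a y ≠ 0}

/-- The collection `C` is `ρ`-product-expanding: every `c ∈ C_1 ⊞ … ⊞ C_m` can be written as
`c = Σ_i a_i` with `a_i ∈ C^{(i)}` and `ρ · Σ_i n_i·|a_i|_i ≤ |c|`
(note `lineCnt i (a i) = n_i · |a_i|_i`). -/
def MProdExpanding {ι : Type*} [Fintype ι] [DecidableEq ι] {n : ι → ℕ} (ρ : ℝ)
    (C : ∀ i, Submodule F (Fin (n i) → F)) : Prop :=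
  ∀ c : (∀ j, Fin (n j)) → F,
    (∃ a : ι → ((∀ j, Fin (n j)) → F), (∀ i, axisIn C i (a i)) ∧ c = ∑ i, a i) →
    ∃ a : ι → ((∀ j, Fin (n j)) → F), (∀ i, axisIn C i (a i)) ∧ c = ∑ i, a i ∧
      ρ * (∑ i, (lineCnt i (a i) : ℝ)) ≤ (gwt c : ℝ)

end RTC

set_option synthInstance.maxHeartbeats 400000
set_option maxHeartbeats 800000

lemma exists_retraction_aux {F V : Type*} [Field F] [AddCommGroup V] [Module F V]
    (C X : Submodule F V) :
    ∃ f : V →ₗ[F] V, (∀ c ∈ C, f c = 0) ∧ (∀ x ∈ X, f x ∈ X) ∧ (∀ x ∈ X, x - f x ∈ C) := by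
  classical
  set π := C.mkQ with hπ
  set Xbar := LinearMap.range (π.comp X.subtype) with hXbar
  obtain ⟨X', hX'⟩ := Submodule.exists_isCompl Xbar
  set pr := Xbar.projectionOnto X' hX' with hpr
  haveI : Module.Projective F ↥Xbar := Module.Projective.of_free
  obtain ⟨s, hs⟩ := (π.comp X.subtype).rangeRestrict.exists_rightInverse_of_surjective
    (LinearMap.range_rangeRestrict _)
  refine ⟨X.subtype ∘ₗ s ∘ₗ pr ∘ₗ π, ?_, ?_, ?_⟩
  · intro c hc
    have : π c = 0 := (Submodule.Quotient.mk_eq_zero C).mpr hc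
    simp [this]
  · intro x hx
    simp only [LinearMap.comp_apply]
    exact SetLike.coe_mem _
  · intro x hx
    have hxq : π x ∈ Xbar := ⟨⟨x, hx⟩, rfl⟩
    have h1 : pr (π x) = ⟨π x, hxq⟩ := by
      have := Submodule.projectionOnto_apply_left hX' (⟨π x, hxq⟩ : Xbar)
      simpa [hpr] using this
    have h2 : (π.comp X.subtype).rangeRestrict (s ⟨π x, hxq⟩) = ⟨π x, hxq⟩ := by
      have := LinearMap.congr_fun hs ⟨π x, hxq⟩
      rwa [LinearMap.comp_apply, LinearMap.id_apply] at this
    have h3 : π ((X.subtype ∘ₗ s ∘ₗ pr ∘ₗ π) x) = π x := by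
      simp only [LinearMap.comp_apply, h1]
      have := congrArg (Subtype.val) h2
      simpa using this
    have h4 := (Submodule.Quotient.eq C).mp h3
    simpa [neg_sub] using C.neg_mem h4


/-- `(X ⊗ Y) ∩ (C1 ⊞ C2) = (X ∩ C1) ⊗ Y + X ⊗ (Y ∩ C2)` as subspaces of the
space of `n×n` matrices, where `C1 ⊞ C2 = C1 ⊗ F^n + F^n ⊗ C2`. -/
theorem statement7 (F : Type) [Field F] [Fintype F] {n : ℕ}
    (C1 C2 X Y : Submodule F (Fin n → F)) :
    RTC.tens X Y ⊓ (RTC.colSp n C1 ⊔ RTC.rowSp n C2) =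
      RTC.tens (X ⊓ C1) Y ⊔ RTC.tens X (Y ⊓ C2) := by
  classical
  obtain ⟨f, hf0, hfX, hfC⟩ := exists_retraction_aux C1 X
  obtain ⟨g, hg0, hgY, hgC⟩ := exists_retraction_aux C2 Y
  set P := LinearMap.toMatrix' f with hP
  set Q := LinearMap.toMatrix' g with hQ
  have hPv : ∀ v : Fin n → F, P.mulVec v = f v := by
    intro v
    rw [hP, ← Matrix.toLin'_apply, Matrix.toLin'_toMatrix']
  have hQv : ∀ v : Fin n → F, Q.mulVec v = g v := by
    intro v
    rw [hQ, ← Matrix.toLin'_apply, Matrix.toLin'_toMatrix']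
  -- columns of P * M
  have hcolP : ∀ (M : Matrix (Fin n) (Fin n) F) (j : Fin n),
      (fun i => (P * M) i j) = f (fun i => M i j) := by
    intro M j
    rw [← hPv]
    funext i
    simp [Matrix.mul_apply, Matrix.mulVec, dotProduct]
  -- rows of M * Qᵀ
  have hrowQ : ∀ (M : Matrix (Fin n) (Fin n) F) (i : Fin n),
      (fun j => (M * Qᵀ) i j) = g (fun j => M i j) := by
    intro M i
    rw [← hQv]
    funext j
    simp [Matrix.mul_apply, Matrix.mulVec, dotProduct, Matrix.transpose_apply,
      mul_comm]
  apply le_antisymm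
  · intro M hM
    obtain ⟨hMten, hMsup⟩ := hM
    have hMcol : ∀ j : Fin n, (fun i => M i j) ∈ X := hMten.1
    have hMrow : ∀ i : Fin n, (fun j => M i j) ∈ Y := hMten.2
    obtain ⟨a, ha, b, hb, hab⟩ := Submodule.mem_sup.mp hMsup
    have haC : ∀ j : Fin n, (fun i => a i j) ∈ C1 := ha
    have hbC : ∀ i : Fin n, (fun j => b i j) ∈ C2 := hb
    -- P * a = 0
    have hPa : P * a = 0 := by
      ext i j
      have := congrFun (hcolP a j) i
      simp only [this, hf0 _ (haC j)]
      simp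
    -- b * Qᵀ = 0
    have hbQ : b * Qᵀ = 0 := by
      ext i j
      have := congrFun (hrowQ b i) j
      simp only [this, hg0 _ (hbC i)]
      simp
    -- (P * M) * Qᵀ = 0
    have hPMQ : (P * M) * Qᵀ = 0 := by
      rw [← hab, Matrix.mul_add, Matrix.add_mul, hPa, Matrix.mul_assoc, hbQ]
      simp
    -- rows of P * M lie in Y
    have hrowPM : ∀ i : Fin n, (fun j => (P * M) i j) ∈ Y := by
      intro i
      have heq : (fun j => (P * M) i j) = ∑ k, P i k • (fun j => M k j) := by
        funext j
        simp [Matrix.mul_apply, Finset.sum_apply]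
      rw [heq]
      exact Submodule.sum_mem _ fun k _ => Y.smul_mem _ (hMrow k)
    -- rows of P * M lie in C2
    have hrowPMC : ∀ i : Fin n, (fun j => (P * M) i j) ∈ C2 := by
      intro i
      have h0 : g (fun j => (P * M) i j) = 0 := by
        rw [← hrowQ (P * M) i]
        funext j
        rw [hPMQ]
        simp
      have := hgC _ (hrowPM i)
      rw [h0, sub_zero] at this
      exact this
    -- columns of P * M lie in X
    have hcolPM : ∀ j : Fin n, (fun i => (P * M) i j) ∈ X := by
      intro j
      rw [hcolP M j]
      exact hfX _ (hMcol j)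
    refine Submodule.mem_sup.mpr ⟨M - P * M, ⟨?_, ?_⟩, P * M, ⟨hcolPM, fun i => ⟨hrowPM i, hrowPMC i⟩⟩, by abel⟩
    · intro j
      have heq : (fun i => (M - P * M) i j)
          = (fun i => M i j) - (fun i => (P * M) i j) := by
        funext i; simp [Matrix.sub_apply]
      rw [heq]
      refine Submodule.mem_inf.mpr ⟨X.sub_mem (hMcol j) (hcolPM j), ?_⟩
      rw [hcolP M j]
      exact hfC _ (hMcol j)
    · intro i
      have heq : (fun j => (M - P * M) i j)
          = (fun j => M i j) - (fun j => (P * M) i j) := by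
        funext j; simp [Matrix.sub_apply]
      rw [heq]
      exact Y.sub_mem (hMrow i) (hrowPM i)
  · apply sup_le
    · intro M hM
      have hMcol : ∀ j : Fin n, (fun i => M i j) ∈ X ⊓ C1 := hM.1
      have hMrow : ∀ i : Fin n, (fun j => M i j) ∈ Y := hM.2
      exact ⟨⟨fun j => (hMcol j).1, hMrow⟩,
        Submodule.mem_sup_left (fun j => (hMcol j).2)⟩
    · intro M hM
      have hMcol : ∀ j : Fin n, (fun i => M i j) ∈ X := hM.1
      have hMrow : ∀ i : Fin n, (fun j => M i j) ∈ Y ⊓ C2 := hM.2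
      exact ⟨⟨hMcol, fun i => (hMrow i).1⟩,
        Submodule.mem_sup_right (fun i => (hMrow i).2)⟩
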